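/- Let ρ > 0, μ₀ > 0, R₀ > 0, n ≥ 1, β₀, …, β_{n−1} > 0, Φ, Ψ : ℝ → ℝ, and let p : ℝ × ℝ → ℝ, P : ℝ → ℝ, and P_j(t) = ∫₀^∞ a^{j−1} e^{−ρa} p(a,t) da for j = 1, …, n. Fix t ∈ ℝ and assume: (i) for each a ≥ 0, ∂p/∂t(a,t) + ∂p/∂a(a,t) + (μ₀ + Ψ(P(t))) p(a,t) = 0; (ii) a ↦ p(a,t) is continuously differentiable on [0,∞) and a ↦ e^{−ρa} p(a,t), a ↦ e^{−ρa} ∂p/∂a(a,t), a ↦ e^{−ρa} ∂p/∂t(a,t) are integrable on [0,∞); (iii) e^{−ρa} p(a,t) → 0 as a → ∞; (iv) P₁ is differentiable at t with P₁′(t) = ∫₀^∞ e^{−ρa} ∂p/∂t(a,t) da; (v) the renewal (birth) condition p(0,t) = R₀ Φ(P(t)) Σ_{i=0}^{n−1} β_i P_{i+1}(t) holds. Then P₁′(t) = (R₀ β₀ Φ(P(t)) − ρ − μ₀ − Ψ(P(t))) P₁(t) + R₀ Φ(P(t)) Σ_{i=1}^{n−1} β_i P_{i+1}(t). -/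

import Mathlib

open Real Set MeasureTheory Filter Finset

/-- If the age density `p` satisfies the transport equation
`p_t + p_a + (μ₀ + Ψ(P(t))) p = 0` at time `t` together with the renewal condition
`p(0,t) = R₀ Φ(P(t)) Σ_{i=0}^{n−1} β_i P_{i+1}(t)`, with the stated integrability, decay
and smoothness hypotheses, and differentiation under the integral sign is valid for
`P₁(t) = ∫₀^∞ e^{−ρa} p(a,t) da`, then
`P₁′(t) = (R₀ β₀ Φ(P(t)) − ρ − μ₀ − Ψ(P(t))) P₁(t) + R₀ Φ(P(t)) Σ_{i=1}^{n−1} β_i P_{i+1}(t)`. -/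
theorem stmt_15 (ρ μ₀ R₀ : ℝ) (hρ : 0 < ρ) (hμ₀ : 0 < μ₀) (hR₀ : 0 < R₀)
    (n : ℕ) (hn : 1 ≤ n) (β : ℕ → ℝ) (hβ : ∀ i < n, 0 < β i) (Φ Ψ : ℝ → ℝ)
    (p : ℝ → ℝ → ℝ) (P : ℝ → ℝ) (Pm : ℕ → ℝ → ℝ) (t : ℝ) (pt pa : ℝ → ℝ)
    -- the moments P_j(t) = ∫₀^∞ a^(j−1) e^{−ρa} p(a,t) da for j = 1, …, n
    (hPm : ∀ j : ℕ, 1 ≤ j → j ≤ n → ∀ s : ℝ,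
      Pm j s = ∫ a in Set.Ioi (0 : ℝ), a ^ (j - 1) * Real.exp (-ρ * a) * p a s)
    -- (i) the partial derivatives exist and the transport equation holds
    (hpt : ∀ a ∈ Set.Ici (0 : ℝ), HasDerivAt (fun s => p a s) (pt a) t)
    (hpa : ∀ a ∈ Set.Ici (0 : ℝ), HasDerivAt (fun b => p b t) (pa a) a)
    (hPDE : ∀ a ∈ Set.Ici (0 : ℝ), pt a + pa a + (μ₀ + Ψ (P t)) * p a t = 0)
    -- (ii) smoothness and integrability on [0,∞)
    (hc : ContinuousOn (fun a => p a t) (Set.Ici 0))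
    (hc' : ContinuousOn pa (Set.Ici 0))
    (hint1 : IntegrableOn (fun a : ℝ => Real.exp (-ρ * a) * p a t) (Set.Ici 0))
    (hint2 : IntegrableOn (fun a : ℝ => Real.exp (-ρ * a) * pa a) (Set.Ici 0))
    (hint3 : IntegrableOn (fun a : ℝ => Real.exp (-ρ * a) * pt a) (Set.Ici 0))
    -- (iii) decay at infinity
    (hlim : Tendsto (fun a : ℝ => Real.exp (-ρ * a) * p a t) atTop (nhds 0))
    -- (iv) differentiation under the integral sign
    (hP1' : HasDerivAt (Pm 1) (∫ a in Set.Ioi (0 : ℝ), Real.exp (-ρ * a) * pt a) t)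
    -- (v) the renewal (birth) condition
    (hrenew : p 0 t = R₀ * Φ (P t) * ∑ i ∈ Finset.range n, β i * Pm (i + 1) t) :
    HasDerivAt (Pm 1)
      ((R₀ * β 0 * Φ (P t) - ρ - μ₀ - Ψ (P t)) * Pm 1 t
        + R₀ * Φ (P t) * ∑ i ∈ Finset.Ico 1 n, β i * Pm (i + 1) t) t := by

  -- `Pm 1` as an integral
  have hPm1 : Pm 1 t = ∫ a in Set.Ioi (0 : ℝ), Real.exp (-ρ * a) * p a t := by
    rw [hPm 1 le_rfl hn t]
    simp
  -- integration by parts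
  have key : ∫ a in Set.Ioi (0 : ℝ),
      (-ρ * (Real.exp (-ρ * a) * p a t) + Real.exp (-ρ * a) * pa a)
      = 0 - Real.exp (-ρ * 0) * p 0 t := by
    refine integral_Ioi_of_hasDerivAt_of_tendsto
      (f := fun a => Real.exp (-ρ * a) * p a t)
      (f' := fun a => -ρ * (Real.exp (-ρ * a) * p a t) + Real.exp (-ρ * a) * pa a)
      ?_ ?_ ?_ hlim
    · exact ((Real.continuous_exp.comp (continuous_const.mul continuous_id)).continuousWithinAt).mul
        (hc 0 Set.self_mem_Ici)
    · intro x hx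
      have hx' : (0:ℝ) ≤ x := le_of_lt hx
      have h1 : HasDerivAt (fun a : ℝ => Real.exp (-ρ * a)) (Real.exp (-ρ * x) * (-ρ)) x := by
        simpa using ((hasDerivAt_id x).const_mul (-ρ)).exp
      have := h1.mul (hpa x hx')
      exact this.congr_deriv (by ring)
    · have h2 : IntegrableOn
          (fun a : ℝ => -ρ * (Real.exp (-ρ * a) * p a t) + Real.exp (-ρ * a) * pa a)
          (Set.Ici 0) := (hint1.const_mul (-ρ)).add hint2
      exact h2.mono_set Set.Ioi_subset_Ici_self
  have hint1' : IntegrableOn (fun a : ℝ => Real.exp (-ρ * a) * p a t) (Set.Ioi 0) :=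
    hint1.mono_set Set.Ioi_subset_Ici_self
  have hint2' : IntegrableOn (fun a : ℝ => Real.exp (-ρ * a) * pa a) (Set.Ioi 0) :=
    hint2.mono_set Set.Ioi_subset_Ici_self
  have hsplit : ∫ a in Set.Ioi (0 : ℝ),
      (-ρ * (Real.exp (-ρ * a) * p a t) + Real.exp (-ρ * a) * pa a)
      = -ρ * (∫ a in Set.Ioi (0 : ℝ), Real.exp (-ρ * a) * p a t)
        + ∫ a in Set.Ioi (0 : ℝ), Real.exp (-ρ * a) * pa a := by
    rw [integral_add (hint1'.const_mul (-ρ)) hint2', integral_const_mul]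
  have hpaint : ∫ a in Set.Ioi (0 : ℝ), Real.exp (-ρ * a) * pa a
      = -(p 0 t) + ρ * (∫ a in Set.Ioi (0 : ℝ), Real.exp (-ρ * a) * p a t) := by
    have := key
    rw [hsplit] at this
    simp only [mul_zero, Real.exp_zero, one_mul, zero_sub] at this
    linarith
  -- use the PDE pointwise
  have hpde : ∀ a ∈ Set.Ioi (0:ℝ), Real.exp (-ρ * a) * pt a
      = -(Real.exp (-ρ * a) * pa a) + (-(μ₀ + Ψ (P t))) * (Real.exp (-ρ * a) * p a t) := by
    intro a ha
    have h := hPDE a (Set.mem_Ici.mpr (le_of_lt ha))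
    have : pt a = -pa a - (μ₀ + Ψ (P t)) * p a t := by linarith
    rw [this]; ring
  have hptint : ∫ a in Set.Ioi (0 : ℝ), Real.exp (-ρ * a) * pt a
      = -(∫ a in Set.Ioi (0 : ℝ), Real.exp (-ρ * a) * pa a)
        + (-(μ₀ + Ψ (P t))) * (∫ a in Set.Ioi (0 : ℝ), Real.exp (-ρ * a) * p a t) := by
    have hfneg : IntegrableOn (fun a : ℝ => -(Real.exp (-ρ * a) * pa a)) (Set.Ioi 0) :=
      hint2'.neg
    have hg : IntegrableOn
        (fun a : ℝ => -(μ₀ + Ψ (P t)) * (Real.exp (-ρ * a) * p a t)) (Set.Ioi 0) :=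
      hint1'.const_mul _
    rw [setIntegral_congr_fun measurableSet_Ioi hpde, integral_add hfneg hg,
      integral_neg, integral_const_mul]
  -- renewal condition split
  have hsum : ∑ i ∈ Finset.range n, β i * Pm (i + 1) t
      = β 0 * Pm 1 t + ∑ i ∈ Finset.Ico 1 n, β i * Pm (i + 1) t := by
    rw [Finset.range_eq_Ico, Finset.sum_eq_sum_Ico_succ_bot hn]
  -- conclude
  have hval : ∫ a in Set.Ioi (0 : ℝ), Real.exp (-ρ * a) * pt a
      = (R₀ * β 0 * Φ (P t) - ρ - μ₀ - Ψ (P t)) * Pm 1 t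
        + R₀ * Φ (P t) * ∑ i ∈ Finset.Ico 1 n, β i * Pm (i + 1) t := by
    rw [hptint, hpaint, ← hPm1, hrenew, hsum]
    ring
  rw [← hval]
  exact hP1'
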